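/- Assume D = 0 and T = 1. Let a : [0,∞) → ℝ^L be a differentiable solution of a'(t) = f(a(t)) with a_i(0) ≥ 0 for all i. Then every limit point of the trajectory is a critical point: if (t_n) is a sequence with t_n → ∞ and a(t_n) → a_∞ in ℝ^L, then f(a_∞) = 0. -/

import Mathlib

open Finset Filter

/-- `auxN G κ a i = κ + ∑_{j ~ i} a_j`. -/
noncomputable def auxN {L : ℕ} (G : SimpleGraph (Fin L)) [DecidableRel G.Adj] (κ : ℝ)
    (a : Fin L → ℝ) (i : Fin L) : ℝ :=
  κ + ∑ j ∈ G.neighborFinset i, a j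

/-- The auxin transport vector field
`f_i(a) = D·∑_{k ~ i}(a_k − a_i) + T·∑_{k ~ i}(a_k·a_i/N_k(a) − a_i·a_k/N_i(a))`. -/
noncomputable def auxF {L : ℕ} (G : SimpleGraph (Fin L)) [DecidableRel G.Adj] (κ D T : ℝ)
    (a : Fin L → ℝ) (i : Fin L) : ℝ :=
  D * ∑ k ∈ G.neighborFinset i, (a k - a i) +
    T * ∑ k ∈ G.neighborFinset i,
      (a k * a i / auxN G κ a k - a i * a k / auxN G κ a i)

section Aux

variable {L : ℕ} (G : SimpleGraph (Fin L)) [DecidableRel G.Adj] (κ : ℝ)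

/-- `auxW G κ a = ∑ i, N_i(a) * f_i(a)`, twice this is the dissipation functional. -/
noncomputable def auxW (a : Fin L → ℝ) : ℝ := ∑ i, auxN G κ a i * auxF G κ 0 1 a i

lemma aux_sum_nbr_comm (g : Fin L → Fin L → ℝ) :
    ∑ i, ∑ k ∈ G.neighborFinset i, g i k = ∑ i, ∑ k ∈ G.neighborFinset i, g k i := by
  have h : ∀ u : Fin L → Fin L → ℝ, (∑ i, ∑ k ∈ G.neighborFinset i, u i k)
      = ∑ i, ∑ k, if G.Adj i k then u i k else 0 := by
    intro u
    refine Finset.sum_congr rfl fun i _ => ?_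
    rw [SimpleGraph.neighborFinset_eq_filter, Finset.sum_filter]
  rw [h, h, Finset.sum_comm]
  refine Finset.sum_congr rfl fun i _ => Finset.sum_congr rfl fun k _ => ?_
  by_cases hadj : G.Adj k i
  · rw [if_pos hadj, if_pos hadj.symm]
  · rw [if_neg hadj, if_neg fun h' => hadj h'.symm]

lemma auxN_pos (hκ : 0 < κ) {a : Fin L → ℝ} (ha : ∀ i, 0 ≤ a i) (i : Fin L) :
    0 < auxN G κ a i :=
  add_pos_of_pos_of_nonneg hκ (Finset.sum_nonneg fun j _ => ha j)

lemma auxF_simp (a : Fin L → ℝ) (i : Fin L) :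
    auxF G κ 0 1 a i =
      ∑ k ∈ G.neighborFinset i, (a k * a i / auxN G κ a k - a i * a k / auxN G κ a i) := by
  simp [auxF]

lemma auxF_eq' (a : Fin L → ℝ) (i : Fin L) :
    auxF G κ 0 1 a i
      = a i * ∑ k ∈ G.neighborFinset i, (a k / auxN G κ a k - a k / auxN G κ a i) := by
  rw [auxF_simp, Finset.mul_sum]
  refine Finset.sum_congr rfl fun k _ => ?_
  rw [mul_comm (a k) (a i), mul_div_assoc, mul_div_assoc, ← mul_sub]

lemma auxF_sum_eq_zero (a : Fin L → ℝ) : ∑ i, auxF G κ 0 1 a i = 0 := by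
  have h := aux_sum_nbr_comm G
    (fun i k => a k * a i / auxN G κ a k - a i * a k / auxN G κ a i)
  have hneg : (∑ i, ∑ k ∈ G.neighborFinset i,
      (a i * a k / auxN G κ a i - a k * a i / auxN G κ a k))
      = -∑ i, ∑ k ∈ G.neighborFinset i,
      (a k * a i / auxN G κ a k - a i * a k / auxN G κ a i) := by
    rw [← Finset.sum_neg_distrib]
    refine Finset.sum_congr rfl fun i _ => ?_
    rw [← Finset.sum_neg_distrib]
    refine Finset.sum_congr rfl fun k _ => ?_
    ring
  rw [hneg] at h
  rw [Finset.sum_congr rfl fun i (_ : i ∈ Finset.univ) => auxF_simp G κ a i]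
  linarith

/-- key identity: twice the dissipation functional is a sum of nonnegative terms. -/
lemma two_auxW_eq (hκ : 0 < κ) {a : Fin L → ℝ} (ha : ∀ i, 0 ≤ a i) :
    2 * auxW G κ a = ∑ i, ∑ k ∈ G.neighborFinset i,
      a i * a k * (auxN G κ a i - auxN G κ a k) ^ 2 / (auxN G κ a i * auxN G κ a k) := by
  have hN : ∀ i, 0 < auxN G κ a i := auxN_pos G κ hκ ha
  have hW : auxW G κ a = ∑ i, ∑ k ∈ G.neighborFinset i,
      auxN G κ a i * (a k * a i / auxN G κ a k - a i * a k / auxN G κ a i) := by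
    unfold auxW
    refine Finset.sum_congr rfl fun i _ => ?_
    rw [auxF_simp, Finset.mul_sum]
  have hswap := aux_sum_nbr_comm G
    (fun i k => auxN G κ a i * (a k * a i / auxN G κ a k - a i * a k / auxN G κ a i))
  have h2 : 2 * auxW G κ a = ∑ i, ∑ k ∈ G.neighborFinset i,
      (auxN G κ a i * (a k * a i / auxN G κ a k - a i * a k / auxN G κ a i)
       + auxN G κ a k * (a i * a k / auxN G κ a i - a k * a i / auxN G κ a k)) := by
    rw [two_mul, hW]
    nth_rewrite 1 [hswap]
    rw [← Finset.sum_add_distrib]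
    refine Finset.sum_congr rfl fun i _ => ?_
    rw [← Finset.sum_add_distrib]
    refine Finset.sum_congr rfl fun k _ => ?_
    ring
  rw [h2]
  refine Finset.sum_congr rfl fun i _ => Finset.sum_congr rfl fun k _ => ?_
  have hi := (hN i).ne'
  have hk := (hN k).ne'
  field_simp
  ring

lemma auxW_nonneg (hκ : 0 < κ) {a : Fin L → ℝ} (ha : ∀ i, 0 ≤ a i) : 0 ≤ auxW G κ a := by
  have hN : ∀ i, 0 < auxN G κ a i := auxN_pos G κ hκ ha
  have h2 := two_auxW_eq G κ hκ ha
  have h3 : 0 ≤ 2 * auxW G κ a := by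
    rw [h2]
    refine Finset.sum_nonneg fun i _ => Finset.sum_nonneg fun k _ => ?_
    exact div_nonneg (mul_nonneg (mul_nonneg (ha i) (ha k)) (sq_nonneg _))
      (mul_nonneg (hN i).le (hN k).le)
  linarith

lemma auxF_eq_zero_of_auxW_eq_zero (hκ : 0 < κ) {a : Fin L → ℝ} (ha : ∀ i, 0 ≤ a i)
    (hW : auxW G κ a = 0) : ∀ i, auxF G κ 0 1 a i = 0 := by
  have hN : ∀ i, 0 < auxN G κ a i := auxN_pos G κ hκ ha
  have h2 := two_auxW_eq G κ hκ ha
  rw [hW, mul_zero] at h2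
  have hterm : ∀ i ∈ Finset.univ, ∀ k ∈ G.neighborFinset i,
      a i * a k * (auxN G κ a i - auxN G κ a k) ^ 2 / (auxN G κ a i * auxN G κ a k) = 0 := by
    have houter := (Finset.sum_eq_zero_iff_of_nonneg (fun i _ => Finset.sum_nonneg fun k _ =>
      div_nonneg (mul_nonneg (mul_nonneg (ha i) (ha k)) (sq_nonneg _))
        (mul_nonneg (hN i).le (hN k).le))).1 h2.symm
    intro i hi k hk
    exact (Finset.sum_eq_zero_iff_of_nonneg (fun k _ =>
      div_nonneg (mul_nonneg (mul_nonneg (ha i) (ha k)) (sq_nonneg _))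
        (mul_nonneg (hN i).le (hN k).le))).1 (houter i hi) k hk
  intro i
  rw [auxF_simp]
  refine Finset.sum_eq_zero fun k hk => ?_
  have h := hterm i (Finset.mem_univ i) k hk
  have hik : a i * a k * (auxN G κ a i - auxN G κ a k) = 0 := by
    have hne : auxN G κ a i * auxN G κ a k ≠ 0 := (mul_pos (hN i) (hN k)).ne'
    have hsq : a i * a k * (auxN G κ a i - auxN G κ a k) ^ 2 = 0 :=
      (div_eq_zero_iff.1 h).resolve_right hne
    rcases mul_eq_zero.1 hsq with h1 | h1
    · rw [h1, zero_mul]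
    · rw [pow_eq_zero_iff two_ne_zero] at h1
      rw [h1, mul_zero]
  have hi := (hN i).ne'
  have hk' := (hN k).ne'
  field_simp
  ring_nf
  ring_nf at hik
  linarith [hik]

lemma auxDerivV_value (a : Fin L → ℝ) :
    ∑ i, (auxF G κ 0 1 a i * auxN G κ a i + a i * ∑ j ∈ G.neighborFinset i, auxF G κ 0 1 a j)
      = 2 * auxW G κ a := by
  rw [Finset.sum_add_distrib]
  have h1 : ∑ i, auxF G κ 0 1 a i * auxN G κ a i = auxW G κ a := by
    unfold auxW; exact Finset.sum_congr rfl fun i _ => mul_comm _ _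
  have h2 : ∑ i, a i * ∑ j ∈ G.neighborFinset i, auxF G κ 0 1 a j = auxW G κ a := by
    have hs : ∑ i, a i * ∑ j ∈ G.neighborFinset i, auxF G κ 0 1 a j
        = ∑ i, ∑ j ∈ G.neighborFinset i, a i * auxF G κ 0 1 a j :=
      Finset.sum_congr rfl fun i _ => Finset.mul_sum _ _ _
    rw [hs, aux_sum_nbr_comm G (fun i j => a i * auxF G κ 0 1 a j)]
    have h3 : ∑ i, ∑ j ∈ G.neighborFinset i, a j * auxF G κ 0 1 a i
        = ∑ i, (auxN G κ a i - κ) * auxF G κ 0 1 a i := by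
      refine Finset.sum_congr rfl fun i _ => ?_
      rw [← Finset.sum_mul]
      congr 1
      unfold auxN; ring
    rw [h3]
    have h4 : ∑ i, (auxN G κ a i - κ) * auxF G κ 0 1 a i
        = ∑ i, auxN G κ a i * auxF G κ 0 1 a i - κ * ∑ i, auxF G κ 0 1 a i := by
      rw [Finset.mul_sum, ← Finset.sum_sub_distrib]
      exact Finset.sum_congr rfl fun i _ => by ring
    rw [h4, auxF_sum_eq_zero, mul_zero, sub_zero]
    rfl
  rw [h1, h2]; ring

lemma hasDerivAt_auxV (a : ℝ → Fin L → ℝ) (t : ℝ) (h : HasDerivAt a (auxF G κ 0 1 (a t)) t) :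
    HasDerivAt (fun s => ∑ i, a s i * auxN G κ (a s) i) (2 * auxW G κ (a t)) t := by
  have hv : ∀ i, HasDerivAt (fun s => a s i) (auxF G κ 0 1 (a t) i) t :=
    fun i => hasDerivAt_pi.1 h i
  have hN : ∀ i, HasDerivAt (fun s => auxN G κ (a s) i)
      (∑ j ∈ G.neighborFinset i, auxF G κ 0 1 (a t) j) t := by
    intro i
    have := (HasDerivAt.sum (u := G.neighborFinset i)
      (A := fun j s => a s j) (A' := fun j => auxF G κ 0 1 (a t) j)
      (fun j _ => hv j)).const_add κ
    simpa [auxN] using this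
  have hsum := HasDerivAt.fun_sum (u := (Finset.univ : Finset (Fin L)))
    (A := fun i s => a s i * auxN G κ (a s) i)
    (A' := fun i => auxF G κ 0 1 (a t) i * auxN G κ (a t) i
      + a t i * ∑ j ∈ G.neighborFinset i, auxF G κ 0 1 (a t) j)
    (fun i _ => (hv i).mul (hN i))
  rwa [auxDerivV_value] at hsum

lemma continuous_auxN (i : Fin L) : Continuous fun x : Fin L → ℝ => auxN G κ x i := by
  unfold auxN
  exact continuous_const.add (continuous_finset_sum _ fun j _ => continuous_apply j)

lemma continuous_auxV : Continuous fun x : Fin L → ℝ => ∑ i, x i * auxN G κ x i :=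
  continuous_finset_sum _ fun i _ => (continuous_apply i).mul (continuous_auxN G κ i)

lemma continuousAt_auxF {x : Fin L → ℝ} (hx : ∀ k, auxN G κ x k ≠ 0) (i : Fin L) :
    ContinuousAt (fun y => auxF G κ 0 1 y i) x := by
  simp only [auxF_simp]
  refine tendsto_finset_sum _ fun k _ => ?_
  exact (((continuous_apply k).continuousAt.mul (continuous_apply i).continuousAt).div
      (continuous_auxN G κ k).continuousAt (hx k)).sub
    (((continuous_apply i).continuousAt.mul (continuous_apply k).continuousAt).div
      (continuous_auxN G κ i).continuousAt (hx i))

lemma continuousAt_auxW {x : Fin L → ℝ} (hx : ∀ k, auxN G κ x k ≠ 0) :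
    ContinuousAt (auxW G κ) x := by
  unfold auxW
  exact tendsto_finset_sum _ fun i _ =>
    (continuous_auxN G κ i).continuousAt.mul (continuousAt_auxF G κ hx i)

lemma continuousAt_auxH {x : Fin L → ℝ} (hx : ∀ k, auxN G κ x k ≠ 0) (i : Fin L) :
    ContinuousAt (fun y => ∑ k ∈ G.neighborFinset i,
      (y k / auxN G κ y k - y k / auxN G κ y i)) x := by
  refine tendsto_finset_sum _ fun k _ => ?_
  exact (((continuous_apply k).continuousAt).div
      (continuous_auxN G κ k).continuousAt (hx k)).sub
    (((continuous_apply k).continuousAt).div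
      (continuous_auxN G κ i).continuousAt (hx i))

lemma aux_nonneg_invariant (hκ : 0 < κ) (a : ℝ → Fin L → ℝ)
    (hderiv : ∀ t, 0 ≤ t → HasDerivAt a (auxF G κ 0 1 (a t)) t)
    (hnonneg : ∀ i, 0 ≤ a 0 i) : ∀ t, 0 ≤ t → ∀ i, 0 ≤ a t i := by
  have hconta : ∀ t, 0 ≤ t → ContinuousAt a t := fun t ht => (hderiv t ht).continuousAt
  by_contra hcon
  push_neg at hcon
  obtain ⟨t₀, ht₀, i₀, hi₀⟩ := hcon
  set B : Set ℝ := {t | 0 ≤ t ∧ ∃ i, a t i < 0} with hB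
  have hBne : B.Nonempty := ⟨t₀, ht₀, i₀, hi₀⟩
  have hBbd : BddBelow B := ⟨0, fun t ht => ht.1⟩
  set τ := sInf B with hτ
  have hτ0 : 0 ≤ τ := le_csInf hBne fun t ht => ht.1
  have hgood : ∀ t, 0 ≤ t → t < τ → ∀ i, 0 ≤ a t i := by
    intro t ht htτ i
    by_contra h'
    push_neg at h'
    exact absurd (csInf_le hBbd ⟨ht, i, h'⟩) (not_le.2 htτ)
  have hτgood : ∀ i, 0 ≤ a τ i := by
    intro i
    rcases eq_or_lt_of_le hτ0 with h0 | h0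
    · rw [← h0]; exact hnonneg i
    · have hca : ContinuousAt (fun s => a s i) τ :=
        ((continuous_apply i).continuousAt).comp (hconta τ hτ0)
      have htend : Tendsto (fun s => a s i) (nhdsWithin τ (Set.Iio τ)) (nhds (a τ i)) :=
        (hca.continuousWithinAt (s := Set.Iio τ))
      refine ge_of_tendsto htend ?_
      filter_upwards [Ioo_mem_nhdsLT h0] with s hs
      exact hgood s hs.1.le hs.2 i
  have hNτ : ∀ k, 0 < auxN G κ (a τ) k := auxN_pos G κ hκ hτgood
  have hev : ∀ᶠ t in nhds τ, (∀ k, 0 < auxN G κ (a t) k) ∧ ∀ i, 0 < a τ i → 0 < a t i := by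
    have h1 : ∀ᶠ t in nhds τ, ∀ k, 0 < auxN G κ (a t) k := by
      rw [Filter.eventually_all]
      intro k
      have hT : Tendsto (fun t => auxN G κ (a t) k) (nhds τ) (nhds (auxN G κ (a τ) k)) :=
        ((continuous_auxN G κ k).continuousAt).comp (hconta τ hτ0)
      exact hT.eventually (eventually_gt_nhds (hNτ k))
    have h2 : ∀ᶠ t in nhds τ, ∀ i, 0 < a τ i → 0 < a t i := by
      rw [Filter.eventually_all]
      intro i
      by_cases hpos : 0 < a τ i
      · have hT : Tendsto (fun t => a t i) (nhds τ) (nhds (a τ i)) :=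
          ((continuous_apply i).continuousAt).comp (hconta τ hτ0)
        filter_upwards [hT.eventually (eventually_gt_nhds hpos)] with t ht _
        exact ht
      · filter_upwards with t ht
        exact absurd ht hpos
    exact h1.and h2
  rw [Metric.eventually_nhds_iff] at hev
  obtain ⟨η₁, hη₁, hevP⟩ := hev
  set η := η₁ / 2 with hη
  have hηpos : 0 < η := by positivity
  have hmem : ∀ t ∈ Set.Icc τ (τ + η), dist t τ < η₁ := by
    intro t ht
    rw [Real.dist_eq, abs_of_nonneg (by linarith [ht.1])]
    linarith [ht.2]
  have ht0 : ∀ t ∈ Set.Icc τ (τ + η), 0 ≤ t := fun t ht => le_trans hτ0 ht.1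
  have hzero : ∀ i, a τ i = 0 → ∀ t ∈ Set.Icc τ (τ + η), a t i = 0 := by
    intro i hai
    set c : ℝ → ℝ := fun t => ∑ k ∈ G.neighborFinset i,
      (a t k / auxN G κ (a t) k - a t k / auxN G κ (a t) i) with hc
    have hccont : ContinuousOn c (Set.Icc τ (τ + η)) := by
      intro t ht
      have hNt : ∀ k, auxN G κ (a t) k ≠ 0 := fun k => ((hevP (hmem t ht)).1 k).ne'
      exact ((continuousAt_auxH G κ hNt i).comp (hconta t (ht0 t ht))).continuousWithinAt
    obtain ⟨K, hK⟩ := (isCompact_Icc).exists_bound_of_continuousOn hccont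
    have hbound : ∀ t ∈ Set.Ico τ (τ + η), ‖auxF G κ 0 1 (a t) i‖ ≤ K * ‖a t i‖ + 0 := by
      intro t ht
      rw [auxF_eq', add_zero, norm_mul]
      have h1 : ‖c t‖ ≤ K := hK t (Set.Ico_subset_Icc_self ht)
      calc ‖a t i‖ * ‖c t‖ ≤ ‖a t i‖ * K := mul_le_mul_of_nonneg_left h1 (norm_nonneg _)
        _ = K * ‖a t i‖ := mul_comm _ _
    have hcont2 : ContinuousOn (fun t => a t i) (Set.Icc τ (τ + η)) := fun t ht =>
      (((continuous_apply i).continuousAt).comp (hconta t (ht0 t ht))).continuousWithinAt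
    have hd : ∀ t ∈ Set.Ico τ (τ + η),
        HasDerivWithinAt (fun s => a s i) (auxF G κ 0 1 (a t) i) (Set.Ici t) t := fun t ht =>
      ((hasDerivAt_pi.1 (hderiv t (ht0 t (Set.Ico_subset_Icc_self ht)))) i).hasDerivWithinAt
    have hgr := norm_le_gronwallBound_of_norm_deriv_right_le hcont2 hd
      (by rw [hai, norm_zero]) hbound
    intro t ht
    have h2 := hgr t ht
    rw [gronwallBound_ε0_δ0] at h2
    exact norm_le_zero_iff.1 h2
  have hnobad : ∀ t ∈ Set.Icc τ (τ + η), ∀ i, 0 ≤ a t i := by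
    intro t ht i
    rcases (hτgood i).lt_or_eq with hpos | heq
    · exact ((hevP (hmem t ht)).2 i hpos).le
    · rw [hzero i heq.symm t ht]
  obtain ⟨b, hbB, hbτ⟩ := exists_lt_of_csInf_lt hBne (show sInf B < τ + η by rw [← hτ]; linarith)
  have hbτ' : τ ≤ b := csInf_le hBbd hbB
  obtain ⟨i, hbi⟩ := hbB.2
  exact absurd (hnobad b ⟨hbτ', hbτ.le⟩ i) (not_le.2 hbi)

lemma aux_mass_const (a : ℝ → Fin L → ℝ)
    (hderiv : ∀ t, 0 ≤ t → HasDerivAt a (auxF G κ 0 1 (a t)) t) :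
    ∀ t, 0 ≤ t → ∑ i, a t i = ∑ i, a 0 i := by
  intro t ht
  have hcont : ContinuousOn (fun s => ∑ i, a s i) (Set.Icc 0 t) := by
    intro s hs
    have hca : ContinuousAt (fun s => ∑ i, a s i) s := tendsto_finset_sum _ fun i _ =>
      ((continuous_apply i).continuousAt).comp ((hderiv s hs.1).continuousAt)
    exact hca.continuousWithinAt
  have hd : ∀ s ∈ Set.Ico 0 t, HasDerivWithinAt (fun s => ∑ i, a s i) 0 (Set.Ici s) s := by
    intro s hs
    have hsum := HasDerivAt.fun_sum (u := (Finset.univ : Finset (Fin L)))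
      (A := fun i r => a r i) (A' := fun i => auxF G κ 0 1 (a s) i)
      (fun i _ => hasDerivAt_pi.1 (hderiv s hs.1) i)
    rw [auxF_sum_eq_zero] at hsum
    exact hsum.hasDerivWithinAt
  exact constant_of_has_deriv_right_zero hcont hd t (Set.right_mem_Icc.2 ht)

lemma aux_compact_bound (hκ : 0 < κ) (M : ℝ) :
    ∃ C : ℝ, 0 ≤ C ∧ ∀ x : Fin L → ℝ, (∀ i, 0 ≤ x i) → (∑ i, x i = M) →
      ‖auxF G κ 0 1 x‖ ≤ C := by
  set K : Set (Fin L → ℝ) := {x | (∀ i, 0 ≤ x i) ∧ ∑ i, x i = M} with hKdef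
  by_cases hne : K.Nonempty
  · have hM : 0 ≤ M := by
      obtain ⟨x, hx1, hx2⟩ := hne
      rw [← hx2]
      exact Finset.sum_nonneg fun i _ => hx1 i
    have hclosed : IsClosed K := by
      have h1 : IsClosed {x : Fin L → ℝ | ∀ i, 0 ≤ x i} := by
        have : {x : Fin L → ℝ | ∀ i, 0 ≤ x i} = ⋂ i, {x | 0 ≤ x i} := by
          ext x; simp
        rw [this]
        exact isClosed_iInter fun i => isClosed_le continuous_const (continuous_apply i)
      have h2 : IsClosed {x : Fin L → ℝ | ∑ i, x i = M} :=
        isClosed_eq (continuous_finset_sum _ fun i _ => continuous_apply i) continuous_const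
      exact h1.inter h2
    have hbdd : Bornology.IsBounded K := by
      refine (Metric.isBounded_closedBall (x := (0 : Fin L → ℝ)) (r := M)).subset ?_
      intro x hx
      rw [Metric.mem_closedBall, dist_zero_right]
      rw [pi_norm_le_iff_of_nonneg hM]
      intro i
      rw [Real.norm_eq_abs, abs_of_nonneg (hx.1 i), ← hx.2]
      exact Finset.single_le_sum (fun j _ => hx.1 j) (Finset.mem_univ i)
    have hcompact : IsCompact K := Metric.isCompact_iff_isClosed_bounded.2 ⟨hclosed, hbdd⟩
    have hcontF : ContinuousOn (auxF G κ 0 1) K := by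
      intro x hx
      have hNx : ∀ k, auxN G κ x k ≠ 0 := fun k => (auxN_pos G κ hκ hx.1 k).ne'
      exact (continuousAt_pi.2 fun i => continuousAt_auxF G κ hNx i).continuousWithinAt
    obtain ⟨C, hC⟩ := hcompact.exists_bound_of_continuousOn hcontF
    refine ⟨max C 0, le_max_right _ _, fun x h1 h2 => ?_⟩
    exact le_trans (hC x ⟨h1, h2⟩) (le_max_left _ _)
  · exact ⟨0, le_refl 0, fun x h1 h2 => absurd ⟨h1, h2⟩ fun h => hne ⟨x, h⟩⟩

end Aux

/-- For pure transport (`D = 0`, `T = 1`), every limit point of a nonnegative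
trajectory is a critical point. -/
theorem auxin_limit_point_critical {L : ℕ} (hL : 1 ≤ L) (G : SimpleGraph (Fin L))
    [DecidableRel G.Adj] (κ : ℝ) (hκ : 0 < κ)
    (a : ℝ → Fin L → ℝ)
    (hderiv : ∀ t, 0 ≤ t → HasDerivAt a (auxF G κ 0 1 (a t)) t)
    (hnonneg : ∀ i, 0 ≤ a 0 i)
    (tn : ℕ → ℝ) (htn : Filter.Tendsto tn Filter.atTop Filter.atTop)
    (aInf : Fin L → ℝ)
    (hconv : Filter.Tendsto (fun n => a (tn n)) Filter.atTop (nhds aInf)) :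
    ∀ i, auxF G κ 0 1 aInf i = 0 := by
  intro i
  by_contra hFne
  have hpos := aux_nonneg_invariant G κ hκ a hderiv hnonneg
  set M := ∑ j, a 0 j with hM
  have hmass := aux_mass_const G κ a hderiv
  have hcomp : ∀ j, Tendsto (fun n => a (tn n) j) atTop (nhds (aInf j)) :=
    fun j => ((continuous_apply j).continuousAt.tendsto).comp hconv
  have hevtn : ∀ᶠ n in atTop, 0 ≤ tn n := htn.eventually_ge_atTop 0
  have haInf_nonneg : ∀ j, 0 ≤ aInf j := by
    intro j
    refine ge_of_tendsto (hcomp j) ?_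
    filter_upwards [hevtn] with n hn
    exact hpos (tn n) hn j
  have hNInf : ∀ k, 0 < auxN G κ aInf k := auxN_pos G κ hκ haInf_nonneg
  have hWpos : 0 < auxW G κ aInf := by
    rcases (auxW_nonneg G κ hκ haInf_nonneg).lt_or_eq with h | h
    · exact h
    · exact absurd (auxF_eq_zero_of_auxW_eq_zero G κ hκ haInf_nonneg h.symm i) hFne
  set c₀ := auxW G κ aInf with hc₀
  have hWc : ContinuousAt (auxW G κ) aInf := continuousAt_auxW G κ fun k => (hNInf k).ne'
  have hev2 : ∀ᶠ x in nhds aInf, c₀ / 2 < auxW G κ x :=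
    hWc.eventually (eventually_gt_nhds (by linarith))
  rw [Metric.eventually_nhds_iff] at hev2
  obtain ⟨ε, hε, hball⟩ := hev2
  obtain ⟨C, hC0, hCb⟩ := aux_compact_bound G κ hκ M
  set δ := ε / (2 * (C + 1)) with hδ
  have hδpos : 0 < δ := by positivity
  have hC1 : C + 1 ≠ 0 := by positivity
  have hCδ : C * δ ≤ ε / 2 := by
    have h2 : (C + 1) * δ = ε / 2 := by
      rw [hδ]
      field_simp
    nlinarith
  set g : ℝ → ℝ := fun t => ∑ j, a t j * auxN G κ (a t) j with hg
  have hgd : ∀ t, 0 ≤ t → HasDerivAt g (2 * auxW G κ (a t)) t := fun t ht =>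
    hasDerivAt_auxV G κ a t (hderiv t ht)
  have hgmono : MonotoneOn g (Set.Ici 0) := by
    refine monotoneOn_of_deriv_nonneg (convex_Ici 0)
      (fun t ht => (hgd t ht).continuousAt.continuousWithinAt) ?_ ?_
    · intro t ht
      rw [interior_Ici] at ht
      exact (hgd t ht.le).differentiableAt.differentiableWithinAt
    · intro t ht
      rw [interior_Ici] at ht
      rw [(hgd t ht.le).deriv]
      have := auxW_nonneg G κ hκ (hpos t ht.le)
      linarith
  set l := ∑ j, aInf j * auxN G κ aInf j with hl
  have hgtend : Tendsto (fun n => g (tn n)) atTop (nhds l) :=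
    ((continuous_auxV G κ).continuousAt.tendsto).comp hconv
  have hle : ∀ t, 0 ≤ t → g t ≤ l := by
    intro t ht
    refine ge_of_tendsto hgtend ?_
    filter_upwards [htn.eventually_ge_atTop t, hevtn] with n h1 h2
    exact hgmono (Set.mem_Ici.2 ht) (Set.mem_Ici.2 h2) h1
  have hevdist : ∀ᶠ n in atTop, dist (a (tn n)) aInf < ε / 2 := by
    have := hconv (Metric.ball_mem_nhds aInf (by positivity : (0:ℝ) < ε / 2))
    filter_upwards [this] with n hn
    exact Metric.mem_ball.1 hn
  have hkey : ∀ᶠ n in atTop, g (tn n) + c₀ * δ ≤ l := by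
    filter_upwards [hevtn, hevdist] with n hn hdist
    have hstay : ∀ t ∈ Set.Icc (tn n) (tn n + δ), dist (a t) aInf < ε := by
      intro t ht
      have hspeed : ‖a t - a (tn n)‖ ≤ C * (t - tn n) := by
        refine norm_image_sub_le_of_norm_deriv_le_segment'
          (f := a) (f' := fun s => auxF G κ 0 1 (a s)) ?_ ?_ t ht
        · intro s hs
          exact (hderiv s (le_trans hn hs.1)).hasDerivWithinAt
        · intro s hs
          exact hCb (a s) (hpos s (le_trans hn hs.1)) (hmass s (le_trans hn hs.1))
      calc dist (a t) aInf ≤ dist (a t) (a (tn n)) + dist (a (tn n)) aInf :=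
            dist_triangle _ _ _
        _ < C * (t - tn n) + ε / 2 := by
            rw [dist_eq_norm]
            exact add_lt_add_of_le_of_lt hspeed hdist
        _ ≤ C * δ + ε / 2 := by
            have h1 : t - tn n ≤ δ := by linarith [ht.2]
            nlinarith [ht.1]
        _ ≤ ε := by linarith
    have hud : ∀ t, 0 ≤ t → HasDerivAt (fun t => g t - c₀ * t)
        (2 * auxW G κ (a t) - c₀) t := by
      intro t ht
      exact (hgd t ht).sub (by simpa using (hasDerivAt_id t).const_mul c₀)
    have humono : MonotoneOn (fun t => g t - c₀ * t) (Set.Icc (tn n) (tn n + δ)) := by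
      refine monotoneOn_of_deriv_nonneg (convex_Icc _ _) ?_ ?_ ?_
      · intro t ht
        exact (hud t (le_trans hn ht.1)).continuousAt.continuousWithinAt
      · intro t ht
        rw [interior_Icc] at ht
        exact (hud t (le_trans hn ht.1.le)).differentiableAt.differentiableWithinAt
      · intro t ht
        rw [interior_Icc] at ht
        rw [(hud t (le_trans hn ht.1.le)).deriv]
        have hWt : c₀ / 2 < auxW G κ (a t) :=
          hball (hstay t (Set.mem_Icc.2 ⟨ht.1.le, ht.2.le⟩))
        linarith
    have hstep := humono (Set.mem_Icc.2 ⟨le_refl _, by linarith⟩)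
      (Set.mem_Icc.2 ⟨by linarith, le_refl _⟩) (by linarith)
    have h3 : g (tn n + δ) ≤ l := hle _ (by linarith)
    simp only at hstep
    linarith
  have hfinal : l + c₀ * δ ≤ l := by
    have htend2 : Tendsto (fun n => g (tn n) + c₀ * δ) atTop (nhds (l + c₀ * δ)) :=
      hgtend.add_const _
    exact le_of_tendsto htend2 hkey
  nlinarith [mul_pos hWpos hδpos]
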